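/- Suppose a sublattice of ℤ³ has a basis x₁, x₂, x₃ of mutually orthogonal vectors all of the same Euclidean length ℓ > 0. Then ℓ is a positive integer. -/

import Mathlib

theorem cubic_sublattice_length_integer (ℓ : ℝ) (hℓ : 0 < ℓ)
    (x₁ x₂ x₃ : ℤ × ℤ × ℤ)
    (h11 : (x₁.1 : ℝ) ^ 2 + (x₁.2.1 : ℝ) ^ 2 + (x₁.2.2 : ℝ) ^ 2 = ℓ ^ 2)
    (h22 : (x₂.1 : ℝ) ^ 2 + (x₂.2.1 : ℝ) ^ 2 + (x₂.2.2 : ℝ) ^ 2 = ℓ ^ 2)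
    (h33 : (x₃.1 : ℝ) ^ 2 + (x₃.2.1 : ℝ) ^ 2 + (x₃.2.2 : ℝ) ^ 2 = ℓ ^ 2)
    (h12 : (x₁.1 : ℝ) * x₂.1 + (x₁.2.1 : ℝ) * x₂.2.1 + (x₁.2.2 : ℝ) * x₂.2.2 = 0)
    (h13 : (x₁.1 : ℝ) * x₃.1 + (x₁.2.1 : ℝ) * x₃.2.1 + (x₁.2.2 : ℝ) * x₃.2.2 = 0)
    (h23 : (x₂.1 : ℝ) * x₃.1 + (x₂.2.1 : ℝ) * x₃.2.1 + (x₂.2.2 : ℝ) * x₃.2.2 = 0) :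
    ∃ n : ℕ, ℓ = n := by
  set a1 : ℤ := x₁.1 with ha1
  set a2 : ℤ := x₁.2.1 with ha2
  set a3 : ℤ := x₁.2.2 with ha3
  set b1 : ℤ := x₂.1 with hb1
  set b2 : ℤ := x₂.2.1 with hb2
  set b3 : ℤ := x₂.2.2 with hb3
  set c1 : ℤ := x₃.1 with hc1
  set c2 : ℤ := x₃.2.1 with hc2
  set c3 : ℤ := x₃.2.2 with hc3
  -- n = ℓ²
  set n : ℤ := a1 ^ 2 + a2 ^ 2 + a3 ^ 2 with hn
  have hnℝ : (n : ℝ) = ℓ ^ 2 := by rw [hn]; push_cast; linarith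
  have hnpos : 0 < n := by
    have : (0 : ℝ) < (n : ℝ) := by rw [hnℝ]; positivity
    exact_mod_cast this
  -- the determinant
  set d : ℤ := a1 * (b2 * c3 - b3 * c2) - a2 * (b1 * c3 - b3 * c1)
      + a3 * (b1 * c2 - b2 * c1) with hd
  have hd2 : (d : ℝ) ^ 2 = ℓ ^ 6 := by
    rw [hd]
    push_cast
    linear_combination
      (((b1:ℝ)^2 + b2^2 + b3^2) * ((c1:ℝ)^2 + c2^2 + c3^2)
        - ((b1:ℝ)*c1 + b2*c2 + b3*c3)^2) * h11
      + (ℓ^2 * ((c1:ℝ)^2 + c2^2 + c3^2) - ((a1:ℝ)*c1 + a2*c2 + a3*c3)^2) * h22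
      + (ℓ^4 - ((a1:ℝ)*b1 + a2*b2 + a3*b3)^2) * h33
      + (2 * ((a1:ℝ)*c1 + a2*c2 + a3*c3) * ((b1:ℝ)*c1 + b2*c2 + b3*c3)
          - ℓ^2 * ((a1:ℝ)*b1 + a2*b2 + a3*b3)) * h12
      + (-(ℓ^2) * ((a1:ℝ)*c1 + a2*c2 + a3*c3)) * h13
      + (-(ℓ^2) * ((b1:ℝ)*c1 + b2*c2 + b3*c3)) * h23
  have hdn : d ^ 2 = n ^ 3 := by
    have : ((d : ℝ)) ^ 2 = ((n : ℝ)) ^ 3 := by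
      rw [hd2, hnℝ]; ring
    exact_mod_cast this
  -- q = d / n is rational with q² = n, hence an integer
  set q : ℚ := (d : ℚ) / (n : ℚ) with hq
  have hn0 : (n : ℚ) ≠ 0 := by exact_mod_cast hnpos.ne'
  have hq2 : q ^ 2 = (n : ℚ) := by
    have h : ((d : ℚ)) ^ 2 = ((n : ℚ)) ^ 3 := by exact_mod_cast hdn
    rw [hq, div_pow, div_eq_iff (pow_ne_zero 2 hn0)]
    linear_combination h
  have hden : q.den = 1 := by
    have h1 : (q ^ 2).den = 1 := by rw [hq2]; exact Rat.den_intCast n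
    rw [Rat.den_pow] at h1
    have h2 : q.den ≤ q.den ^ 2 := Nat.le_self_pow (by norm_num) _
    have h3 : 0 < q.den := q.den_pos
    omega
  set m : ℤ := q.num with hm
  have hqm : (m : ℚ) = q := by
    rw [hm, ← Rat.den_eq_one_iff]; exact hden
  have hm2 : m ^ 2 = n := by
    have : ((m : ℚ)) ^ 2 = (n : ℚ) := by rw [hqm]; exact hq2
    exact_mod_cast this
  refine ⟨m.natAbs, ?_⟩
  have hℓ2 : ℓ ^ 2 = ((m.natAbs : ℝ)) ^ 2 := by
    have habs : ((m.natAbs : ℝ)) ^ 2 = ((m : ℝ)) ^ 2 := by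
      rw [Nat.cast_natAbs]
      push_cast
      rw [sq_abs]
    rw [← hnℝ, ← hm2, habs]
    push_cast
    ring
  have hk : (0 : ℝ) ≤ (m.natAbs : ℝ) := by positivity
  nlinarith [hℓ2, hℓ, hk]
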